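/- Fix natural numbers D and k < n, and a k-dimensional linear subspace V of ℝⁿ. Let real numbers δ, r_min, r_max, Λ > 0 be given. Then there exists ε > 0 such that the following holds. For every linear D-simplex Δ in ℝⁿ for which there exists L > 0 with: r_min/L ≤ r_min(Δ) ≤ r_max(Δ) ≤ r_max/L; Λ(Δ) ≤ Λ·L; and every subsimplex Δ' of Δ of dimension at least 1 can be written as a join Δ' = v⋆F of one of its vertices v with the opposite face F such that Δ' is (δ/L)-semitransverse to 𝔉(V) in v — it holds that every subsimplex of Δ of dimension at least 1 is ε-transverse to 𝔉(V). -/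

import Mathlib

noncomputable section

open Metric Set

/-- Two linear subspaces of ℝⁿ are transverse if the dimension of their span is maximal. -/
def Transv {n : ℕ} (V W : Submodule ℝ (EuclideanSpace ℝ (Fin n))) : Prop :=
  Module.finrank ℝ ↥(V ⊔ W) = min (Module.finrank ℝ ↥V + Module.finrank ℝ ↥W) n

/-- The space of directions of the affine span of a family of points (Gr(Δ)). -/
def simplexDir {n m : ℕ} (v : Fin m → EuclideanSpace ℝ (Fin n)) :
    Submodule ℝ (EuclideanSpace ℝ (Fin n)) :=
  (affineSpan ℝ (Set.range v)).direction

/-- Orthogonal projection of ℝⁿ onto the orthogonal complement of V, as a map ℝⁿ → ℝⁿ. -/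
def projPerp {n : ℕ} (V : Submodule ℝ (EuclideanSpace ℝ (Fin n)))
    (x : EuclideanSpace ℝ (Fin n)) : EuclideanSpace ℝ (Fin n) :=
  (Vᗮ.orthogonalProjectionOnto x : EuclideanSpace ℝ (Fin n))

/-- Orthogonal projection onto V as a continuous linear endomorphism of ℝⁿ. -/
def projCL {n : ℕ} (V : Submodule ℝ (EuclideanSpace ℝ (Fin n))) :
    EuclideanSpace ℝ (Fin n) →L[ℝ] EuclideanSpace ℝ (Fin n) :=
  V.subtypeL.comp (V.orthogonalProjectionOnto)

/-- Operator-norm distance between orthogonal projections. -/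
def dProj {n : ℕ} (V W : Submodule ℝ (EuclideanSpace ℝ (Fin n))) : ℝ :=
  ‖projCL V - projCL W‖

/-- `p⋆Δ` is `δ`-semitransverse to `𝔉(V)` in `p`. -/
def SemiT {n m : ℕ} (δ : ℝ) (p : EuclideanSpace ℝ (Fin n))
    (v : Fin m → EuclideanSpace ℝ (Fin n))
    (V : Submodule ℝ (EuclideanSpace ℝ (Fin n))) : Prop :=
  ∀ p' : EuclideanSpace ℝ (Fin n), dist p' p < δ →
    AffineIndependent ℝ (Fin.cons p' v : Fin (m+1) → EuclideanSpace ℝ (Fin n)) ∧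
    Transv (simplexDir (Fin.cons p' v : Fin (m+1) → EuclideanSpace ℝ (Fin n))) V

/-- Maximal distance between two vertices of a simplex. -/
def rMax {n m : ℕ} (v : Fin m → EuclideanSpace ℝ (Fin n)) : ℝ :=
  ⨆ i, ⨆ j, dist (v i) (v j)

/-- Minimal distance between a vertex and the affine span of the opposite face. -/
def rMin {n m : ℕ} (v : Fin m → EuclideanSpace ℝ (Fin n)) : ℝ :=
  ⨅ i, Metric.infDist (v i) (affineSpan ℝ (v '' {i}ᶜ) : Set (EuclideanSpace ℝ (Fin n)))

/-- The degeneracy quantity Λ(Δ). -/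
def Lam {n m : ℕ} (v : Fin (m+1) → EuclideanSpace ℝ (Fin n)) : ℝ :=
  sSup {t : ℝ | ∃ lam : Fin m → ℝ,
    ‖∑ i, lam i • (v i.succ - v 0)‖ = 1 ∧ ∃ i, t = |lam i|}

/-- ε-transversality of a simplex with vertices `v` to the constant foliation `𝔉(V)`. -/
def EpsT {n m : ℕ} (ε : ℝ) (v : Fin (m+1) → EuclideanSpace ℝ (Fin n))
    (V : Submodule ℝ (EuclideanSpace ℝ (Fin n))) : Prop :=
  ∀ D : Submodule ℝ (EuclideanSpace ℝ (Fin n)),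
    Module.finrank ℝ ↥D = m → dProj (simplexDir v) D < ε → Transv D V

/-- δ-semitransversality of a simplex in its `i`-th vertex. -/
def STat {n m : ℕ} (δ : ℝ) (w : Fin m → EuclideanSpace ℝ (Fin n)) (i : Fin m)
    (V : Submodule ℝ (EuclideanSpace ℝ (Fin n))) : Prop :=
  ∀ p' : EuclideanSpace ℝ (Fin n), dist p' (w i) < δ →
    AffineIndependent ℝ (Function.update w i p') ∧
    Transv (simplexDir (Function.update w i p')) V

/-- The coordinate subspace ℝᵏ × {0} of ℝⁿ. -/
def stdFol (n k : ℕ) : Submodule ℝ (EuclideanSpace ℝ (Fin n)) where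
  carrier := {x | ∀ i : Fin n, k ≤ (i : ℕ) → x i = 0}
  zero_mem' := fun i _ => rfl
  add_mem' := by
    intro x y hx hy i hi
    show x i + y i = 0
    rw [hx i hi, hy i hi, add_zero]
  smul_mem' := by
    intro c x hx i hi
    show c * x i = 0
    rw [hx i hi, mul_zero]

/-- Graph of a linear map V → V⊥ as a subspace of ℝⁿ. -/
def graphOf {n : ℕ} {V : Submodule ℝ (EuclideanSpace ℝ (Fin n))}
    (T : ↥V →L[ℝ] ↥Vᗮ) : Submodule ℝ (EuclideanSpace ℝ (Fin n)) :=
  LinearMap.range (V.subtype + Vᗮ.subtype.comp T.toLinearMap)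

section Helpers

open RealInnerProductSpace Module

open Module

variable {n : ℕ}
local notation "E" => EuclideanSpace ℝ (Fin n)

lemma projCL_norm_le (V : Submodule ℝ E) (x : E) : ‖projCL V x‖ ≤ ‖x‖ := by
  have : ‖projCL V x‖ = ‖V.orthogonalProjectionOnto x‖ := rfl
  rw [this]
  calc ‖V.orthogonalProjectionOnto x‖ ≤ ‖V.orthogonalProjectionOnto‖ * ‖x‖ :=
        (V.orthogonalProjectionOnto).le_opNorm x
  _ ≤ 1 * ‖x‖ := by gcongr ?_ * ?_ <;> first | exact Submodule.orthogonalProjectionOnto_norm_le V | exact le_rfl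
  _ = ‖x‖ := one_mul _

lemma projCL_adjoint (V : Submodule ℝ E) :
    ContinuousLinearMap.adjoint (projCL V) = projCL V :=
  (isSelfAdjoint_starProjection V).adjoint_eq

lemma norm_adjoint' (A : E →L[ℝ] E) : ‖ContinuousLinearMap.adjoint A‖ = ‖A‖ := by
  exact ContinuousLinearMap.adjoint.norm_map A

-- minimality
lemma dist_proj_le (V : Submodule ℝ E) (x : E) (c : E) (hc : c ∈ V) :
    ‖x - projCL V x‖ ≤ ‖x - c‖ := by
  have := Submodule.starProjection_minimal (U := V) x
  have h2 : ‖x - projCL V x‖ = ‖x - V.starProjection x‖ := rfl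
  rw [h2, this]
  exact ciInf_le ⟨0, by rintro r ⟨y, rfl⟩; positivity⟩ (⟨c, hc⟩ : V)

lemma projCL_mem (V : Submodule ℝ E) (x : E) : projCL V x ∈ V := Submodule.coe_mem (V.orthogonalProjectionOnto x)

lemma projCL_inner_symm (V : Submodule ℝ E) (x y : E) :
    ⟪projCL V x, y⟫ = ⟪x, projCL V y⟫ := by
  exact Submodule.inner_starProjection_left_eq_right V x y

lemma projCL_eq_self (V : Submodule ℝ E) (x : E) (h : x ∈ V) : projCL V x = x := by
  exact Submodule.starProjection_eq_self_iff.2 h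

lemma rotation1 (F : Submodule ℝ E) (u : E) (hu : ‖u‖ = 1) (η : ℝ) (hη0 : 0 ≤ η)
    (hη : η ≤ 1/2) (h : ‖projCL F u‖ ≤ η) :
    ∃ D' : Submodule ℝ E, finrank ℝ D' = finrank ℝ F ∧ u ∈ D'ᗮ ∧
      ‖projCL F - projCL D'‖ ≤ 3 * η := by
  classical
  set φ : E →ₗ[ℝ] E :=
    LinearMap.id - ((innerSL ℝ u).toLinearMap.smulRight u) with hφ
  have hφx : ∀ x : E, φ x = x - ⟪u, x⟫ • u := fun x => rfl
  have hinner : ∀ z : E, z ∈ F → |⟪u, z⟫| ≤ η * ‖z‖ := by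
    intro z hz
    have h1 : ⟪u, z⟫ = ⟪projCL F u, z⟫ := by
      rw [projCL_inner_symm, projCL_eq_self F z hz]
    rw [h1]
    calc |⟪projCL F u, z⟫| ≤ ‖projCL F u‖ * ‖z‖ := abs_real_inner_le_norm _ _
    _ ≤ η * ‖z‖ := by gcongr
  have hdiff : ∀ z : E, ‖φ z - z‖ = |⟪u, z⟫| := by
    intro z; rw [hφx]; simp [norm_smul, hu]
  have hlow : ∀ z : E, z ∈ F → (1 - η) * ‖z‖ ≤ ‖φ z‖ := by
    intro z hz
    have h1 : ‖z‖ ≤ ‖φ z‖ + ‖φ z - z‖ := by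
      have := norm_add_le (φ z) (z - φ z)
      simpa [norm_sub_rev] using this
    have h2 := hdiff z ▸ hinner z hz
    nlinarith [norm_nonneg z]
  set D' : Submodule ℝ E := F.map φ with hD'
  refine ⟨D', ?_, ?_, ?_⟩
  · -- finrank
    have hinj : Function.Injective (φ.comp F.subtype) := by
      intro a b hab
      have h0 : φ ((a : E) - b) = 0 := by
        simp only [LinearMap.comp_apply, Submodule.coe_subtype] at hab
        rw [map_sub, hab, sub_self]
      have hz : ((a : E) - b) ∈ F := F.sub_mem a.2 b.2
      have := hlow _ hz
      rw [h0, norm_zero] at this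
      have hz0 : ‖(a : E) - b‖ = 0 := by nlinarith [norm_nonneg ((a:E) - b)]
      have : (a : E) = b := by
        rwa [norm_sub_eq_zero_iff] at hz0
      exact Subtype.ext this
    have hr : D' = LinearMap.range (φ.comp F.subtype) := by
      rw [LinearMap.range_comp, Submodule.range_subtype]
    rw [hr, LinearMap.finrank_range_of_inj hinj]
  · -- u ∈ D'ᗮ
    rw [Submodule.mem_orthogonal]
    rintro y ⟨z, hz, rfl⟩
    rw [hφx]
    rw [inner_sub_left, real_inner_smul_left, real_inner_self_eq_norm_sq, hu]
    rw [real_inner_comm z u]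
    ring
  · -- norm bound
    have hAB : projCL F - projCL D' =
        (projCL F).comp (1 - projCL D') - (1 - projCL F).comp (projCL D') := by
      refine ContinuousLinearMap.ext fun x => ?_
      have e1 : (((projCL F).comp (1 - projCL D') - (1 - projCL F).comp (projCL D') :
          EuclideanSpace ℝ (Fin n) →L[ℝ] EuclideanSpace ℝ (Fin n))) x
          = (projCL F x - projCL F (projCL D' x)) - (projCL D' x - projCL F (projCL D' x)) := by
        simp only [ContinuousLinearMap.sub_apply, ContinuousLinearMap.comp_apply,
          ContinuousLinearMap.one_apply, map_sub]
      rw [ContinuousLinearMap.sub_apply, e1]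
      abel
    have hφmem : ∀ z : E, z ∈ F → φ z ∈ D' := fun z hz => Submodule.mem_map_of_mem hz
    have hB : ‖(1 - projCL F).comp (projCL D')‖ ≤ 2 * η := by
      apply ContinuousLinearMap.opNorm_le_bound _ (by positivity)
      intro x
      obtain ⟨z, hz, hyz⟩ : ∃ z ∈ F, φ z = projCL D' x := projCL_mem D' x
      have h1 : ‖(1 - projCL F).comp (projCL D') x‖ = ‖projCL D' x - projCL F (projCL D' x)‖ := by
        simp [ContinuousLinearMap.sub_apply]
      rw [h1]
      have h2 : ‖projCL D' x - projCL F (projCL D' x)‖ ≤ ‖projCL D' x - z‖ :=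
        dist_proj_le F _ z hz
      have h3 : ‖projCL D' x - z‖ = |⟪u, z⟫| := by rw [← hyz]; exact hdiff z
      have h4 : ‖z‖ ≤ 2 * ‖projCL D' x‖ := by
        have := hlow z hz
        rw [hyz] at this
        nlinarith [norm_nonneg z]
      have h5 := hinner z hz
      have h6 := projCL_norm_le D' x
      have h7 := norm_nonneg x
      calc ‖projCL D' x - projCL F (projCL D' x)‖ ≤ |⟪u, z⟫| := h2.trans_eq h3
      _ ≤ η * ‖z‖ := h5
      _ ≤ 2 * η * ‖x‖ := by nlinarith
    have hA : ‖(projCL F).comp (1 - projCL D')‖ ≤ η := by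
      have hadj : ContinuousLinearMap.adjoint ((projCL F).comp (1 - projCL D')) =
          (1 - projCL D').comp (projCL F) := by
        rw [ContinuousLinearMap.adjoint_comp]
        rw [map_sub, projCL_adjoint, projCL_adjoint]
        congr 1
        rw [ContinuousLinearMap.one_def, ContinuousLinearMap.adjoint_id]
      have hnorm : ‖(projCL F).comp (1 - projCL D')‖ = ‖(1 - projCL D').comp (projCL F)‖ := by
        rw [← hadj]
        exact (ContinuousLinearMap.adjoint.norm_map _).symm
      rw [hnorm]
      apply ContinuousLinearMap.opNorm_le_bound _ hη0
      intro x
      have h1 : ‖(1 - projCL D').comp (projCL F) x‖ = ‖projCL F x - projCL D' (projCL F x)‖ := by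
        simp [ContinuousLinearMap.sub_apply]
      rw [h1]
      have h2 : ‖projCL F x - projCL D' (projCL F x)‖ ≤ ‖projCL F x - φ (projCL F x)‖ :=
        dist_proj_le D' _ _ (hφmem _ (projCL_mem F x))
      have h3 : ‖projCL F x - φ (projCL F x)‖ = |⟪u, projCL F x⟫| := by
        rw [norm_sub_rev]; exact hdiff _
      have h4 := hinner _ (projCL_mem F x)
      have h5 := projCL_norm_le F x
      have h6 := norm_nonneg x
      calc ‖projCL F x - projCL D' (projCL F x)‖ ≤ |⟪u, projCL F x⟫| := h2.trans_eq h3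
      _ ≤ η * ‖projCL F x‖ := h4
      _ ≤ η * ‖x‖ := by nlinarith
    calc ‖projCL F - projCL D'‖
        ≤ ‖(projCL F).comp (1 - projCL D')‖ + ‖(1 - projCL F).comp (projCL D')‖ := by
          rw [hAB]; exact norm_sub_le _ _
    _ ≤ η + 2 * η := add_le_add hA hB
    _ = 3 * η := by ring

lemma projCL_orthogonal (V : Submodule ℝ E) : projCL Vᗮ = 1 - projCL V := by
  refine ContinuousLinearMap.ext fun x => ?_
  have h1 : projCL Vᗮ x = x - projCL V x := Submodule.starProjection_orthogonal_val (K := V) x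
  have h2 : ((1 - projCL V : EuclideanSpace ℝ (Fin n) →L[ℝ] EuclideanSpace ℝ (Fin n))) x
      = x - projCL V x := by
    simp [ContinuousLinearMap.sub_apply]
  rw [h1, h2]

lemma dProj_orthogonal_aux (V W : Submodule ℝ E) :
    ‖projCL Vᗮ - projCL Wᗮ‖ = ‖projCL V - projCL W‖ := by
  rw [projCL_orthogonal, projCL_orthogonal]
  have : (1 - projCL V) - (1 - projCL W) = -(projCL V - projCL W) := by abel
  rw [this, norm_neg]


lemma finrank_simplexDir {m : ℕ} {w : Fin (m+1) → E} (hw : AffineIndependent ℝ w) :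
    finrank ℝ (simplexDir w) = m := by
  rw [simplexDir, direction_affineSpan]
  exact hw.finrank_vectorSpan (by simp)

lemma simplexDir_mono {m m' : ℕ} (w : Fin m → E) (w' : Fin m' → E)
    (h : Set.range w' ⊆ Set.range w) : simplexDir w' ≤ simplexDir w :=
  AffineSubspace.direction_le (affineSpan_mono ℝ h)

lemma sub_mem_simplexDir {m : ℕ} (w : Fin m → E) (a b : Fin m) :
    w a - w b ∈ simplexDir w := by
  rw [simplexDir, direction_affineSpan]
  have := vsub_mem_vectorSpan ℝ (Set.mem_range_self (f := w) a) (Set.mem_range_self b)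
  simpa using this

lemma le_rMax' {m : ℕ} (w : Fin (m+1) → E) (a b : Fin (m+1)) :
    dist (w a) (w b) ≤ ⨆ i, ⨆ j, dist (w i) (w j) := by
  have h1 : dist (w a) (w b) ≤ ⨆ j, dist (w a) (w j) :=
    le_ciSup (f := fun j => dist (w a) (w j)) (Set.finite_range _).bddAbove b
  exact h1.trans (le_ciSup (α := ℝ) (f := fun i => ⨆ j, dist (w i) (w j))
    (Set.finite_range _).bddAbove a)

lemma simplexDir_le_sup {m : ℕ} (w : Fin (m+2) → E) (i l : Fin (m+2)) (hil : l ≠ i) :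
    simplexDir w ≤ simplexDir (w ∘ (Fin.succAboveEmb i)) ⊔
      Submodule.span ℝ {w i - w l} := by
  rw [simplexDir, direction_affineSpan,
    vectorSpan_range_eq_span_range_vsub_right ℝ w l]
  rw [Submodule.span_le]
  rintro x ⟨j, rfl⟩
  by_cases hj : j = i
  · subst hj
    exact Submodule.mem_sup_right (Submodule.subset_span (by simp [vsub_eq_sub]))
  · obtain ⟨j', hj'⟩ := Fin.exists_succAbove_eq hj
    obtain ⟨l', hl'⟩ := Fin.exists_succAbove_eq hil
    apply Submodule.mem_sup_left
    show w j -ᵥ w l ∈ _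
    have : w j -ᵥ w l = (w ∘ (Fin.succAboveEmb i)) j' - (w ∘ (Fin.succAboveEmb i)) l' := by
      simp [Function.comp, hj', hl', vsub_eq_sub]
    rw [this]
    exact sub_mem_simplexDir _ _ _

lemma rotation2 (F : Submodule ℝ E) (u : E) (hu : ‖u‖ = 1) (η : ℝ) (hη0 : 0 ≤ η)
    (hη : η ≤ 1/2) (h : ‖u - projCL F u‖ ≤ η) :
    ∃ D' : Submodule ℝ E, finrank ℝ D' = finrank ℝ F ∧ u ∈ D' ∧
      ‖projCL F - projCL D'‖ ≤ 3 * η := by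
  have h' : ‖projCL Fᗮ u‖ ≤ η := by
    have := Submodule.starProjection_orthogonal_val (K := F) u
    have h2 : projCL Fᗮ u = u - projCL F u := this
    rwa [h2]
  obtain ⟨E', hE1, hE2, hE3⟩ := rotation1 Fᗮ u hu η hη0 hη h'
  refine ⟨E'ᗮ, ?_, hE2, ?_⟩
  · have k1 : finrank ℝ E' + finrank ℝ E'ᗮ = n := by
      simpa using Submodule.finrank_add_finrank_orthogonal (K := E')
    have k2 : finrank ℝ Fᗮ + finrank ℝ F = n := by
      have := Submodule.finrank_add_finrank_orthogonal (K := F)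
      simpa [add_comm] using this
    omega
  · have hF := projCL_orthogonal (V := Fᗮ)
    rw [Submodule.orthogonal_orthogonal] at hF
    have : ‖projCL F - projCL E'ᗮ‖ = ‖projCL Fᗮ - projCL E'‖ := by
      rw [hF, projCL_orthogonal E']
      have e : ((1 - projCL Fᗮ) - (1 - projCL E') :
          EuclideanSpace ℝ (Fin n) →L[ℝ] EuclideanSpace ℝ (Fin n))
          = -(projCL Fᗮ - projCL E') := by abel
      rw [e, norm_neg]
    rw [this]
    exact hE3

lemma projCL_eq_zero {n : ℕ} (V : Submodule ℝ (EuclideanSpace ℝ (Fin n))) (x : EuclideanSpace ℝ (Fin n))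
    (h : x ∈ Vᗮ) : projCL V x = 0 := by
  exact (Submodule.starProjection_apply_eq_zero_iff V).2 h


lemma projCL_of_le {n : ℕ} {F W : Submodule ℝ (EuclideanSpace ℝ (Fin n))} (h : F ≤ W)
    (x : EuclideanSpace ℝ (Fin n)) : projCL F (projCL W x) = projCL F x := by
  exact congrArg Subtype.val (Submodule.orthogonalProjectionOnto_starProjection_of_le h x)

lemma finrank_inf_pos {n : ℕ} {A B : Submodule ℝ (EuclideanSpace ℝ (Fin n))}
    {u : EuclideanSpace ℝ (Fin n)} (huA : u ∈ A) (huB : u ∈ B) (hu0 : u ≠ 0) :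
    0 < Module.finrank ℝ ↥(A ⊓ B) := by
  have hne : A ⊓ B ≠ ⊥ := by
    intro hb
    apply hu0
    have hm : u ∈ A ⊓ B := Submodule.mem_inf.mpr ⟨huA, huB⟩
    rw [hb] at hm
    exact (Submodule.mem_bot ℝ).mp hm
  exact Nat.pos_of_ne_zero fun h0 => hne (Submodule.finrank_eq_zero.mp h0)

set_option maxHeartbeats 2000000 in
theorem stmt10_aux (n D k : ℕ) (hk : k < n)
    (V : Submodule ℝ (EuclideanSpace ℝ (Fin n))) (hV : Module.finrank ℝ ↥V = k)
    (δ rmin rmax Λ : ℝ) (hδ : 0 < δ) (hrmin : 0 < rmin) (hrmax : 0 < rmax) (hΛ : 0 < Λ)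
    (Lam' : (Fin (D+1) → EuclideanSpace ℝ (Fin n)) → ℝ)
    (rMin' : (Fin (D+1) → EuclideanSpace ℝ (Fin n)) → ℝ) :
    ∀ M : ℕ, ∃ ε > (0:ℝ),
      ∀ v : Fin (D+1) → EuclideanSpace ℝ (Fin n), AffineIndependent ℝ v →
        (∃ L > (0:ℝ),
          rmin / L ≤ rMin' v ∧ rMin' v ≤ rMax v ∧ rMax v ≤ rmax / L ∧
          Lam' v ≤ Λ * L ∧
          (∀ (m : ℕ) (σ : Fin (m+2) ↪ Fin (D+1)), ∃ i : Fin (m+2),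
            STat (δ / L) (v ∘ σ) i V)) →
        ∀ σ : Fin (M+1) ↪ Fin (D+1), EpsT ε (v ∘ σ) V := by
  have hn : finrank ℝ (EuclideanSpace ℝ (Fin n)) = n := finrank_euclideanSpace_fin
  intro M
  induction M with
  | zero =>
    refine ⟨1, one_pos, fun v hv hgood σ => ?_⟩
    intro Dm hfrD _
    have hD : Dm = ⊥ := Submodule.finrank_eq_zero.mp hfrD
    subst hD
    unfold Transv
    rw [bot_sup_eq, finrank_bot, zero_add, hV, min_eq_left hk.le]
  | succ m ih =>
    obtain ⟨ε', hε'pos, hIH⟩ := ih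
    set c : ℝ := 1 + rmax / δ with hc
    have hc1 : (1:ℝ) ≤ c := by
      have h0 : 0 ≤ rmax / δ := by positivity
      simp only [hc]; linarith
    have hc0 : (0:ℝ) < c := by linarith
    set η : ℝ := min (1/2) (ε'/6) with hη
    have hηpos : 0 < η := lt_min (by norm_num) (by positivity)
    have hη12 : η ≤ 1/2 := min_le_left _ _
    have hη6 : η ≤ ε'/6 := min_le_right _ _
    set ε : ℝ := η / c with hεdef
    have hεpos : 0 < ε := by positivity
    have hεη : ε ≤ η := div_le_self hηpos.le hc1
    have hεc : ε * c = η := div_mul_cancel₀ η hc0.ne'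
    refine ⟨ε, hεpos, fun v hv hgood σ => ?_⟩
    obtain ⟨L, hL, hgr1, hgr2, hgr3, hgr4, hstat⟩ := hgood
    intro Dm hfrD hdless
    set w : Fin (m+2) → EuclideanSpace ℝ (Fin n) := v ∘ σ with hwdef
    have hw : AffineIndependent ℝ w := hv.comp_embedding σ
    set W := simplexDir w with hWdef
    have hfrW : finrank ℝ W = m+1 := finrank_simplexDir hw
    have hdlt : ‖projCL W - projCL Dm‖ < ε := hdless
    have hgood' : ∃ L > (0:ℝ),
        rmin / L ≤ rMin' v ∧ rMin' v ≤ rMax v ∧ rMax v ≤ rmax / L ∧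
        Lam' v ≤ Λ * L ∧
        (∀ (m' : ℕ) (σ' : Fin (m'+2) ↪ Fin (D+1)), ∃ i : Fin (m'+2),
          STat (δ / L) (v ∘ σ') i V) :=
      ⟨L, hL, hgr1, hgr2, hgr3, hgr4, hstat⟩
    by_cases hcase : m + 1 + k ≤ n
    · -- case: sum of dimensions at most n
      unfold Transv
      rw [hfrD, hV, min_eq_left hcase]
      suffices hbot : Dm ⊓ V = ⊥ by
        have hsum := Submodule.finrank_sup_add_finrank_inf_eq Dm V
        rw [hbot, finrank_bot, hfrD, hV] at hsum
        omega
      by_contra hbot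
      obtain ⟨x, hxmem, hx0⟩ := (Submodule.ne_bot_iff _).mp hbot
      set u := (‖x‖⁻¹ : ℝ) • x with hudef
      have hu : ‖u‖ = 1 := norm_smul_inv_norm hx0
      have hu0 : u ≠ 0 := by intro h; rw [h, norm_zero] at hu; norm_num at hu
      have huD : u ∈ Dm := Dm.smul_mem _ (Submodule.mem_inf.mp hxmem).1
      have huV : u ∈ V := V.smul_mem _ (Submodule.mem_inf.mp hxmem).2
      set w0 := projCL W u with hw0def
      have hclose : ‖u - w0‖ < ε := by
        have h1 : projCL Dm u = u := projCL_eq_self Dm u huD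
        have h2 : u - w0 = (projCL Dm - projCL W) u := by
          rw [ContinuousLinearMap.sub_apply, h1]
        rw [h2]
        calc ‖(projCL Dm - projCL W) u‖ ≤ ‖projCL Dm - projCL W‖ * ‖u‖ :=
              (projCL Dm - projCL W).le_opNorm u
        _ = ‖projCL W - projCL Dm‖ := by rw [hu, mul_one, norm_sub_rev]
        _ < ε := hdlt
      obtain ⟨i, hstati⟩ := hstat m σ
      set l : Fin (m+2) := if i = 0 then 1 else 0 with hldef
      have hil : l ≠ i := by
        rcases eq_or_ne i 0 with h|h
        · simp only [hldef, h, if_pos rfl]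
          intro hh
          exact absurd (congrArg Fin.val hh) (by simp)
        · simp only [hldef, if_neg h]
          exact (Ne.symm h)
      set F := simplexDir (w ∘ (Fin.succAboveEmb i)) with hFdef
      have hwface : AffineIndependent ℝ (w ∘ (Fin.succAboveEmb i)) := hw.comp_embedding _
      have hfrF : finrank ℝ F = m := finrank_simplexDir hwface
      set d := w i - w l with hddef
      have hWle : W ≤ F ⊔ Submodule.span ℝ {d} := simplexDir_le_sup w i l hil
      have hw0mem : w0 ∈ F ⊔ Submodule.span ℝ {d} := hWle (projCL_mem W u)
      obtain ⟨f, hf, s, hs, hsum0⟩ := Submodule.mem_sup.mp hw0mem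
      obtain ⟨t, rfl⟩ := Submodule.mem_span_singleton.mp hs
      by_cases hts : |t| * δ ≤ ε * L
      · -- far case: u is close to the face F
        have hdn : ‖d‖ ≤ rmax / L := by
          have h1 : dist (w i) (w l) ≤ rMax v := le_rMax' v (σ i) (σ l)
          calc ‖d‖ = dist (w i) (w l) := (dist_eq_norm _ _).symm
          _ ≤ rmax / L := h1.trans hgr3
        have htt : |t| ≤ ε * L / δ := by
          rw [le_div_iff₀ hδ]; exact hts
        have htle : |t| * ‖d‖ ≤ ε * (rmax/δ) := by
          calc |t| * ‖d‖ ≤ (ε * L / δ) * (rmax / L) :=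
                mul_le_mul htt hdn (norm_nonneg d) (by positivity)
          _ = ε * (rmax/δ) := by field_simp
        have hfu : ‖u - f‖ < η := by
          have he : u - f = (u - w0) + t • d := by rw [← hsum0]; abel
          rw [he]
          calc ‖(u - w0) + t • d‖ ≤ ‖u - w0‖ + ‖t • d‖ := norm_add_le _ _
          _ = ‖u - w0‖ + |t| * ‖d‖ := by rw [norm_smul, Real.norm_eq_abs]
          _ < ε + ε * (rmax/δ) := by linarith
          _ = ε * c := by rw [hc]; ring
          _ ≤ η := le_of_eq hεc
        have hprojF : ‖u - projCL F u‖ ≤ η := (dist_proj_le F u f hf).trans hfu.le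
        obtain ⟨D', hfrD', huD', hD'close⟩ := rotation2 F u hu η hηpos.le hη12 hprojF
        have hTrans : Transv D' V := by
          apply hIH v hv hgood' ((Fin.succAboveEmb i).trans σ) D'
          · rw [hfrD', hfrF]
          · show ‖projCL (simplexDir (v ∘ ((Fin.succAboveEmb i).trans σ))) - projCL D'‖ < ε'
            have hFeq : simplexDir (v ∘ ((Fin.succAboveEmb i).trans σ)) = F := rfl
            rw [hFeq]
            calc ‖projCL F - projCL D'‖ ≤ 3 * η := hD'close
            _ ≤ 3 * (ε'/6) := by linarith
            _ < ε' := by linarith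
        unfold Transv at hTrans
        rw [hfrD', hfrF, hV, min_eq_left (by omega : m + k ≤ n)] at hTrans
        have hsum2 := Submodule.finrank_sup_add_finrank_inf_eq D' V
        rw [hfrD', hfrF, hV] at hsum2
        have hinfpos := finrank_inf_pos huD' huV hu0
        omega
      · -- near case: move the vertex i to catch u
        push_neg at hts
        have ht0 : t ≠ 0 := by
          intro h
          rw [h, abs_zero, zero_mul] at hts
          exact absurd hts (mul_pos hεpos hL).not_gt
        have habs : (0:ℝ) < |t| := abs_pos.mpr ht0
        set e := t⁻¹ • (u - w0) with hedef
        have hen : ‖e‖ < δ / L := by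
          have h3 : ‖e‖ = |t|⁻¹ * ‖u - w0‖ := by
            rw [hedef, norm_smul, Real.norm_eq_abs, abs_inv]
          have h4 : ‖u - w0‖ * L < |t| * δ :=
            lt_trans (mul_lt_mul_of_pos_right hclose hL) hts
          rw [h3, lt_div_iff₀ hL]
          have h5 : |t|⁻¹ * ‖u - w0‖ * L = (‖u - w0‖ * L) * |t|⁻¹ := by ring
          rw [h5]
          calc (‖u - w0‖ * L) * |t|⁻¹ < (|t| * δ) * |t|⁻¹ :=
                mul_lt_mul_of_pos_right h4 (inv_pos.mpr habs)
          _ = δ := by field_simp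
        set p' := w i + e with hp'def
        have hdist : dist p' (w i) < δ / L := by
          rw [dist_eq_norm, hp'def, add_sub_cancel_left]; exact hen
        obtain ⟨haff', htransv'⟩ := hstati p' hdist
        set w' := Function.update w i p' with hw'def
        set W' := simplexDir w' with hW'def
        have hfrW' : finrank ℝ W' = m + 1 := finrank_simplexDir haff'
        have hfaceeq : w' ∘ (Fin.succAboveEmb i) = w ∘ (Fin.succAboveEmb i) := by
          funext j
          simp only [Function.comp_apply, Fin.succAboveEmb_apply, hw'def]
          exact Function.update_of_ne (Fin.succAbove_ne i j) _ _
        have hFle' : F ≤ W' := by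
          rw [hFdef, ← hfaceeq]
          exact simplexDir_mono w' _ (by rintro y ⟨j, rfl⟩; exact ⟨i.succAbove j, rfl⟩)
        have hde : d + e ∈ W' := by
          have h1 : w' i - w' l = d + e := by
            rw [hw'def]
            rw [Function.update_self, Function.update_of_ne hil, hp'def, hddef]
            abel
          rw [← h1]
          exact sub_mem_simplexDir w' i l
        have huW' : u ∈ W' := by
          have h1 : u = f + t • (d + e) := by
            rw [smul_add, hedef, smul_inv_smul₀ ht0, ← hsum0]
            abel
          rw [h1]
          exact W'.add_mem (hFle' hf) (W'.smul_mem _ hde)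
        unfold Transv at htransv'
        rw [hfrW', hV, min_eq_left hcase] at htransv'
        have hsum2 := Submodule.finrank_sup_add_finrank_inf_eq W' V
        rw [hfrW', hV] at hsum2
        have hinfpos := finrank_inf_pos huW' huV hu0
        omega
    · -- case: sum of dimensions exceeds n
      unfold Transv
      rw [hfrD, hV, min_eq_right (by omega : n ≤ m + 1 + k)]
      suffices htop : Dm ⊔ V = ⊤ by
        rw [htop, finrank_top]; exact hn
      by_contra htop
      have hbne : (Dm ⊔ V)ᗮ ≠ ⊥ := fun hb => htop (Submodule.orthogonal_eq_bot_iff.mp hb)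
      obtain ⟨x, hxmem, hx0⟩ := (Submodule.ne_bot_iff _).mp hbne
      set u := (‖x‖⁻¹ : ℝ) • x with hudef
      have hu : ‖u‖ = 1 := norm_smul_inv_norm hx0
      have hu0 : u ≠ 0 := by intro h; rw [h, norm_zero] at hu; norm_num at hu
      have humem : u ∈ (Dm ⊔ V)ᗮ := Submodule.smul_mem _ _ hxmem
      have huD : u ∈ Dmᗮ := Submodule.orthogonal_le le_sup_left humem
      have huV : u ∈ Vᗮ := Submodule.orthogonal_le le_sup_right humem
      have hPDu : projCL Dm u = 0 := projCL_eq_zero _ _ huD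
      have hPWu : ‖projCL W u‖ < ε := by
        have h1 : projCL W u = (projCL W - projCL Dm) u := by
          rw [ContinuousLinearMap.sub_apply, hPDu, sub_zero]
        rw [h1]
        calc ‖(projCL W - projCL Dm) u‖ ≤ ‖projCL W - projCL Dm‖ * ‖u‖ :=
              (projCL W - projCL Dm).le_opNorm u
        _ = ‖projCL W - projCL Dm‖ := by rw [hu, mul_one]
        _ < ε := hdlt
      set F := simplexDir (w ∘ (Fin.succAboveEmb (0 : Fin (m+2)))) with hFdef
      have hwface : AffineIndependent ℝ (w ∘ (Fin.succAboveEmb (0 : Fin (m+2)))) :=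
        hw.comp_embedding _
      have hfrF : finrank ℝ F = m := finrank_simplexDir hwface
      have hFle : F ≤ W :=
        simplexDir_mono w _ (by rintro y ⟨j, rfl⟩; exact ⟨(0:Fin (m+2)).succAbove j, rfl⟩)
      have hPFu : ‖projCL F u‖ ≤ η := by
        have h1 : projCL F u = projCL F (projCL W u) := (projCL_of_le hFle u).symm
        rw [h1]
        have h2 := projCL_norm_le F (projCL W u)
        linarith
      obtain ⟨D', hfrD', huD'perp, hD'close⟩ := rotation1 F u hu η hηpos.le hη12 hPFu
      have hTrans : Transv D' V := by
        apply hIH v hv hgood' ((Fin.succAboveEmb (0 : Fin (m+2))).trans σ) D'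
        · rw [hfrD', hfrF]
        · show ‖projCL (simplexDir (v ∘ ((Fin.succAboveEmb (0:Fin (m+2))).trans σ))) - projCL D'‖ < ε'
          have hFeq : simplexDir (v ∘ ((Fin.succAboveEmb (0:Fin (m+2))).trans σ)) = F := rfl
          rw [hFeq]
          calc ‖projCL F - projCL D'‖ ≤ 3 * η := hD'close
          _ ≤ 3 * (ε'/6) := by linarith
          _ < ε' := by linarith
      unfold Transv at hTrans
      rw [hfrD', hfrF, hV, min_eq_right (by omega : n ≤ m + k)] at hTrans
      have htop' : D' ⊔ V = ⊤ := by
        apply Submodule.eq_top_of_finrank_eq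
        rw [hTrans, hn]
      have humem2 : u ∈ (D' ⊔ V)ᗮ := by
        rw [← Submodule.inf_orthogonal]
        exact Submodule.mem_inf.mpr ⟨huD'perp, huV⟩
      rw [htop', Submodule.top_orthogonal_eq_bot] at humem2
      exact hu0 ((Submodule.mem_bot ℝ).mp humem2)

end Helpers

theorem stmt_10 (n D k : ℕ) (hk : k < n)
    (V : Submodule ℝ (EuclideanSpace ℝ (Fin n))) (hV : Module.finrank ℝ ↥V = k)
    (δ rmin rmax Λ : ℝ) (hδ : 0 < δ) (hrmin : 0 < rmin) (hrmax : 0 < rmax) (hΛ : 0 < Λ) :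
    ∃ ε > (0:ℝ),
      ∀ v : Fin (D+1) → EuclideanSpace ℝ (Fin n), AffineIndependent ℝ v →
        (∃ L > (0:ℝ),
          rmin / L ≤ rMin v ∧ rMin v ≤ rMax v ∧ rMax v ≤ rmax / L ∧
          Lam v ≤ Λ * L ∧
          (∀ (m : ℕ) (σ : Fin (m+2) ↪ Fin (D+1)), ∃ i : Fin (m+2),
            STat (δ / L) (v ∘ σ) i V)) →
        ∀ (m : ℕ) (σ : Fin (m+2) ↪ Fin (D+1)), EpsT ε (v ∘ σ) V := by
  have aux := stmt10_aux n D k hk V hV δ rmin rmax Λ hδ hrmin hrmax hΛ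
    (fun v => Lam v) (fun v => rMin v)
  choose eps heps hkey using aux
  refine ⟨(Finset.range (D+2)).inf' Finset.nonempty_range_add_one eps, ?_, ?_⟩
  · rw [gt_iff_lt, Finset.lt_inf'_iff]
    intro b _
    exact heps b
  · intro v hv hgood m σ
    by_cases hm : m + 1 < D + 2
    · intro Dm hfr hd
      exact hkey (m+1) v hv hgood σ Dm hfr
        (lt_of_lt_of_le hd (Finset.inf'_le eps (Finset.mem_range.mpr hm)))
    · exfalso
      have hcard := Fintype.card_le_of_injective σ σ.injective
      simp only [Fintype.card_fin] at hcard
      omega
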